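/- arXiv:2401.01866 — 2 statements merged into one kernel-verified Lean document; each statement's English description precedes it below -/
import Mathlib

section
/- Concentration of uniform order statistics: Let U₁, …, Uₙ be i.i.d. uniform random variables on [0,1] and let U_(1) ≤ ⋯ ≤ U_(n) denote their order statistics. Then for all n > 2, the probability that there exists some k ∈ {1,…,n} with |U_(k) − k/n| > (log n)/√n is at most 2n·exp(−(2/3)(log n)²). -/
open MeasureTheory ProbabilityTheory Set


/-- helper: if F 0 = 0 and F' ≥ 0 on [0,∞) then F t ≥ 0 for t ≥ 0 -/
lemma aux_nonneg_of_deriv {F F' : ℝ → ℝ} (hF : ∀ x, HasDerivAt F (F' x) x)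
    (h0 : F 0 = 0) (hF' : ∀ x, 0 ≤ x → 0 ≤ F' x) {t : ℝ} (ht : 0 ≤ t) : 0 ≤ F t := by
  have hd : Differentiable ℝ F := fun x => (hF x).differentiableAt
  have hmono : MonotoneOn F (Set.Ici 0) := by
    refine monotoneOn_of_deriv_nonneg (convex_Ici 0) hd.continuous.continuousOn
      hd.differentiableOn ?_
    intro x hx
    rw [interior_Ici] at hx
    rw [(hF x).deriv]
    exact hF' x (le_of_lt hx)
  have := hmono Set.self_mem_Ici (Set.mem_Ici.mpr ht) ht
  linarith

lemma lemA {t s : ℝ} (ht : 0 ≤ t) (hs0 : 0 ≤ s) (hs1 : s ≤ 1) :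
    Real.exp (t * s) ≤ 1 + t * s + s ^ 2 * (Real.exp t - 1 - t) := by
  have key : ∀ x : ℝ, HasDerivAt
      (fun u => 1 + u * s + s ^ 2 * (Real.exp u - 1 - u) - Real.exp (u * s))
      (s + s ^ 2 * (Real.exp x - 1) - Real.exp (x * s) * s) x := by
    intro x
    have h1 : HasDerivAt (fun u : ℝ => u * s) (1 * s) x := (hasDerivAt_id x).mul_const s
    have h2 : HasDerivAt (fun u : ℝ => Real.exp u - 1 - u) (Real.exp x - 1) x := by
      simpa using ((Real.hasDerivAt_exp x).sub_const 1).fun_sub (hasDerivAt_id x)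
    have h3 := h2.const_mul (s ^ 2)
    have h4 : HasDerivAt (fun u : ℝ => Real.exp (u * s)) (Real.exp (x * s) * (1 * s)) x :=
      h1.exp
    have := ((h1.const_add 1).fun_add h3).fun_sub h4
    refine this.congr_deriv ?_
    ring
  have h0 : (fun u => 1 + u * s + s ^ 2 * (Real.exp u - 1 - u) - Real.exp (u * s)) 0 = 0 := by
    simp
  have hF' : ∀ x, 0 ≤ x → 0 ≤ s + s ^ 2 * (Real.exp x - 1) - Real.exp (x * s) * s := by
    intro x hx
    have hconv := convexOn_exp.2 (Set.mem_univ (0:ℝ)) (Set.mem_univ x)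
      (by linarith : (0:ℝ) ≤ 1 - s) hs0 (by ring)
    simp only [smul_eq_mul, mul_zero, zero_add, Real.exp_zero, mul_one] at hconv
    -- hconv : Real.exp (s * x) ≤ (1 - s) + s * Real.exp x
    have h5 : Real.exp (x * s) ≤ 1 - s + s * Real.exp x := by rwa [mul_comm]
    nlinarith [sq_nonneg s, hs0]
  have := aux_nonneg_of_deriv key h0 hF' ht
  linarith

lemma lemB {u : ℝ} (hu : 0 ≤ u) : Real.exp (-u) ≤ 1 - u + u ^ 2 / 2 := by
  have key : ∀ x : ℝ, HasDerivAt (fun v => 1 - v + v ^ 2 / 2 - Real.exp (-v))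
      (-1 + x - Real.exp (-x) * (-1)) x := by
    intro x
    have h1 : HasDerivAt (fun v : ℝ => 1 - v) (-1) x := by
      simpa using (hasDerivAt_id x).const_sub 1
    have h2 : HasDerivAt (fun v : ℝ => v ^ 2 / 2) (x) x := by
      have := (hasDerivAt_pow 2 x).div_const 2
      simpa using this
    have h3 : HasDerivAt (fun v : ℝ => Real.exp (-v)) (Real.exp (-x) * (-1)) x :=
      ((hasDerivAt_id x).neg).exp
    have := (h1.fun_add h2).fun_sub h3
    convert this using 1
  have h0 : (fun v => 1 - v + v ^ 2 / 2 - Real.exp (-v)) 0 = 0 := by simp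
  have hF' : ∀ x : ℝ, 0 ≤ x → 0 ≤ -1 + x - Real.exp (-x) * (-1) := by
    intro x hx
    have := Real.add_one_le_exp (-x)
    nlinarith
  have := aux_nonneg_of_deriv key h0 hF' hu
  linarith

lemma lemC {t : ℝ} (ht : 0 ≤ t) : t ^ 2 / 2 ≤ Real.exp t - 1 - t := by
  have key : ∀ x : ℝ, HasDerivAt (fun v => Real.exp v - 1 - v - v ^ 2 / 2)
      (Real.exp x - 1 - x) x := by
    intro x
    have h2 : HasDerivAt (fun v : ℝ => v ^ 2 / 2) (x) x := by
      have := (hasDerivAt_pow 2 x).div_const 2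
      simpa using this
    simpa using (((Real.hasDerivAt_exp x).sub_const 1).fun_sub (hasDerivAt_id x)).fun_sub h2
  have h0 : (fun v => Real.exp v - 1 - v - v ^ 2 / 2) 0 = 0 := by simp
  have hF' : ∀ x : ℝ, 0 ≤ x → 0 ≤ Real.exp x - 1 - x := by
    intro x hx
    have := Real.add_one_le_exp x
    linarith
  have := aux_nonneg_of_deriv key h0 hF' ht
  linarith

lemma factor_le {p t : ℝ} (hp0 : 0 ≤ p) (hp1 : p ≤ 1) (ht : 0 ≤ t) :
    1 + (Real.exp t - 1) * p ≤ Real.exp (p * t + (Real.exp t - 1 - t) / 4) := by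
  set c := Real.exp t - 1 - t with hc
  have hc0 : 0 ≤ c := by have := lemC ht; nlinarith [sq_nonneg t]
  have hA : Real.exp (t * (1 - p)) ≤ 1 + t * (1 - p) + (1 - p) ^ 2 * c :=
    lemA ht (by linarith) (by linarith)
  have hB : Real.exp (-(t * p)) ≤ 1 - t * p + (t * p) ^ 2 / 2 :=
    lemB (mul_nonneg ht hp0)
  have hB' : Real.exp (-(t * p)) ≤ 1 - t * p + p ^ 2 * c := by
    have h2 := lemC ht
    nlinarith [sq_nonneg p, sq_nonneg (t * p)]
  have hcomb : (1 - p) * Real.exp (-(t * p)) + p * Real.exp (t * (1 - p))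
      ≤ 1 + p * (1 - p) * c := by
    have h1 := mul_le_mul_of_nonneg_left hB' (by linarith : (0:ℝ) ≤ 1 - p)
    have h2 := mul_le_mul_of_nonneg_left hA hp0
    nlinarith
  have hpc : p * (1 - p) * c ≤ c / 4 := by nlinarith [sq_nonneg (p - 1/2)]
  have hexp : 1 + (Real.exp t - 1) * p
      = Real.exp (p * t) * ((1 - p) * Real.exp (-(t * p)) + p * Real.exp (t * (1 - p))) := by
    have e1 : Real.exp (p * t) * Real.exp (-(t * p)) = 1 := by
      rw [← Real.exp_add]; ring_nf; exact Real.exp_zero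
    have e2 : Real.exp (p * t) * Real.exp (t * (1 - p)) = Real.exp t := by
      rw [← Real.exp_add]; ring_nf
    calc 1 + (Real.exp t - 1) * p
        = (1 - p) * 1 + p * Real.exp t := by ring
      _ = (1 - p) * (Real.exp (p * t) * Real.exp (-(t * p)))
          + p * (Real.exp (p * t) * Real.exp (t * (1 - p))) := by rw [e1, e2]
      _ = _ := by ring
  rw [hexp, Real.exp_add]
  have hmul : (1 - p) * Real.exp (-(t * p)) + p * Real.exp (t * (1 - p)) ≤ Real.exp (c / 4) := by
    have h14 : 1 + c / 4 ≤ Real.exp (c / 4) := by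
      have := Real.add_one_le_exp (c / 4); linarith
    nlinarith
  have := mul_le_mul_of_nonneg_left hmul (le_of_lt (Real.exp_pos (p * t)))
  linarith

/-- Chernoff bound for sums of indicator variables of i.i.d.-preimages. -/
lemma chernoff_indicator {Ω : Type*} [MeasurableSpace Ω] (P : Measure Ω)
    [IsProbabilityMeasure P] {n : ℕ} (U : Fin n → Ω → ℝ) (hm : ∀ i, Measurable (U i))
    (hi : iIndepFun U P)
    (S : Set ℝ) (hS : MeasurableSet S) (p : ℝ)
    (hp : ∀ i, P ((U i) ⁻¹' S) = ENNReal.ofReal p) (hp0 : 0 ≤ p)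
    (t ε : ℝ) (ht : 0 ≤ t) :
    P {ω | ε ≤ ∑ i, S.indicator (fun _ => (1:ℝ)) (U i ω)} ≤
      ENNReal.ofReal (Real.exp (-t * ε) * (1 + (Real.exp t - 1) * p) ^ n) := by
  classical
  set B : Fin n → Ω → ℝ := fun i ω => S.indicator (fun _ => (1:ℝ)) (U i ω) with hB
  have hBmeas : ∀ i, Measurable (B i) :=
    fun i => (measurable_const.indicator hS).comp (hm i)
  have hBindep : iIndepFun B P :=
    hi.comp (fun _ => S.indicator (fun _ => (1:ℝ))) (fun _ => measurable_const.indicator hS)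
  have hrw : ∀ i, (fun ω => Real.exp (t * B i ω))
      = fun ω => ((U i) ⁻¹' S).indicator (fun _ => Real.exp t - 1) ω + 1 := by
    intro i
    funext ω
    by_cases h : U i ω ∈ S
    · simp only [hB, Set.indicator_of_mem h, Set.indicator_of_mem (Set.mem_preimage.mpr h),
        mul_one]
      ring
    · simp only [hB, Set.indicator_of_notMem h,
        Set.indicator_of_notMem (fun hc => h (Set.mem_preimage.mp hc)), mul_zero,
        Real.exp_zero]
      ring
  have hint : ∀ i, Integrable (fun ω => Real.exp (t * B i ω)) P := by
    intro i
    rw [hrw i]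
    exact ((integrable_const (Real.exp t - 1)).indicator ((hm i) hS)).add (integrable_const 1)
  have hmgf : ∀ i, mgf (B i) P t = 1 + (Real.exp t - 1) * p := by
    intro i
    rw [mgf, hrw i, integral_add ((integrable_const (Real.exp t - 1)).indicator ((hm i) hS))
      (integrable_const 1), integral_indicator_const _ ((hm i) hS), integral_const]
    simp only [measureReal_def, hp i, ENNReal.toReal_ofReal hp0, smul_eq_mul, measure_univ, ENNReal.toReal_one,
      one_smul]
    ring
  have hintS : Integrable (fun ω => Real.exp (t * (∑ i, B i) ω)) P :=
    hBindep.integrable_exp_mul_sum hBmeas (fun i _ => hint i)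
  have hcher := measure_ge_le_exp_mul_mgf (μ := P) (X := ∑ i, B i) ε ht hintS
  rw [hBindep.mgf_sum hBmeas Finset.univ] at hcher
  have hprod : (∏ i : Fin n, mgf (B i) P t) = (1 + (Real.exp t - 1) * p) ^ n := by
    rw [Finset.prod_congr rfl (fun i _ => hmgf i)]
    simp [Finset.prod_const, Finset.card_univ]
  rw [hprod] at hcher
  have hset : {ω | ε ≤ (∑ i, B i) ω} = {ω | ε ≤ ∑ i, S.indicator (fun _ => (1:ℝ)) (U i ω)} := by
    ext ω
    simp [hB, Finset.sum_apply]
  rw [hset] at hcher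
  calc P {ω | ε ≤ ∑ i, S.indicator (fun _ => (1:ℝ)) (U i ω)}
      = ENNReal.ofReal (P {ω | ε ≤ ∑ i, S.indicator (fun _ => (1:ℝ)) (U i ω)}).toReal := by
        rw [ENNReal.ofReal_toReal (measure_ne_top _ _)]
    _ ≤ ENNReal.ofReal (Real.exp (-t * ε) * (1 + (Real.exp t - 1) * p) ^ n) :=
        ENNReal.ofReal_le_ofReal hcher

/-- the numeric optimization: with `t = 1.3 log n / √n` the Chernoff bound is small. -/
lemma numeric_bound (n : ℕ) (hn : 2 < n) (p ε : ℝ) (hp0 : 0 ≤ p) (hp1 : p ≤ 1)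
    (hε : (n:ℝ) * p + Real.sqrt n * Real.log n ≤ ε) :
    Real.exp (-(13/10 * (Real.log n / Real.sqrt n)) * ε)
      * (1 + (Real.exp (13/10 * (Real.log n / Real.sqrt n)) - 1) * p) ^ n
      ≤ Real.exp (-(2/3) * Real.log n ^ 2) := by
  have hn1 : (1:ℝ) < (n:ℝ) := by exact_mod_cast Nat.lt_of_lt_of_le Nat.one_lt_two hn.le
  have hn0 : (0:ℝ) < (n:ℝ) := by linarith
  have hlog : 0 < Real.log n := Real.log_pos hn1
  have hsq : Real.sqrt n ^ 2 = (n:ℝ) := Real.sq_sqrt hn0.le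
  have hsqrt0 : 0 < Real.sqrt n := Real.sqrt_pos.mpr hn0
  set δ : ℝ := Real.log n / Real.sqrt n with hδ
  have hδ0 : 0 < δ := div_pos hlog hsqrt0
  set t : ℝ := 13/10 * δ with htdef
  have ht0 : 0 ≤ t := by positivity
  -- t ≤ 1
  have hloge : Real.log n ≤ 2 * Real.sqrt n / Real.exp 1 := by
    have h1 : Real.log (Real.sqrt n) ≤ Real.sqrt n / Real.exp 1 := by
      have h2 : Real.log (Real.sqrt n / Real.exp 1) ≤ Real.sqrt n / Real.exp 1 - 1 :=
        Real.log_le_sub_one_of_pos (by positivity)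
      rw [Real.log_div hsqrt0.ne' (Real.exp_pos 1).ne', Real.log_exp] at h2
      linarith
    have h3 : Real.log (Real.sqrt n) = Real.log n / 2 := Real.log_sqrt hn0.le
    rw [h3] at h1
    have h4 : 2 * (Real.sqrt n / Real.exp 1) = 2 * Real.sqrt n / Real.exp 1 := by ring
    linarith
  have hexp1 : (2.7182818283 : ℝ) < Real.exp 1 := Real.exp_one_gt_d9
  have ht1 : t ≤ 1 := by
    have h5 : (13/10 : ℝ) * (2 * Real.sqrt n / Real.exp 1) ≤ Real.sqrt n := by
      have he : (13/10:ℝ) * (2 * Real.sqrt n / Real.exp 1) = (13/5 * Real.sqrt n) / Real.exp 1 := by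
        ring
      rw [he, div_le_iff₀ (Real.exp_pos 1)]
      nlinarith [hsqrt0, hexp1]
    have h6 := mul_le_mul_of_nonneg_left hloge (by norm_num : (0:ℝ) ≤ 13/10)
    have h7 : t = (13/10 * Real.log n) / Real.sqrt n := by rw [htdef, hδ]; ring
    rw [h7, div_le_one hsqrt0]
    linarith
  have hc : Real.exp t - 1 - t ≤ (Real.exp 1 - 2) * t ^ 2 := by
    have h := lemA (t := 1) (s := t) zero_le_one ht0 ht1
    rw [one_mul] at h
    nlinarith
  have hfac := factor_le hp0 hp1 ht0
  have hbase0 : 0 ≤ 1 + (Real.exp t - 1) * p := by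
    have h6 := Real.add_one_le_exp t
    nlinarith
  have hpow : (1 + (Real.exp t - 1) * p) ^ n
      ≤ Real.exp ((n:ℝ) * (p * t + (Real.exp t - 1 - t) / 4)) := by
    rw [Real.exp_nat_mul]
    exact pow_le_pow_left₀ hbase0 hfac n
  have hδsq : (n:ℝ) * δ ^ 2 = Real.log n ^ 2 := by
    rw [hδ, div_pow, hsq]
    field_simp
  have htsqrt : t * (Real.sqrt n * Real.log n) = 13/10 * Real.log n ^ 2 := by
    rw [htdef, hδ]
    field_simp
  have h8 : (n:ℝ) * t ^ 2 = 169/100 * Real.log n ^ 2 := by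
    have h8a : (n:ℝ) * t ^ 2 = 169/100 * ((n:ℝ) * δ ^ 2) := by rw [htdef]; ring
    rw [h8a, hδsq]
  have hexpbound : -t * ε + (n:ℝ) * (p * t + (Real.exp t - 1 - t) / 4)
      ≤ -(2/3) * Real.log n ^ 2 := by
    have h7 : (n:ℝ) * (Real.exp t - 1 - t) ≤ (n:ℝ) * ((Real.exp 1 - 2) * t ^ 2) :=
      mul_le_mul_of_nonneg_left hc hn0.le
    have h9 : -(t * ε) ≤ -(t * ((n:ℝ) * p + Real.sqrt n * Real.log n)) := by
      have := mul_le_mul_of_nonneg_left hε ht0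
      linarith
    have hexp19 : Real.exp 1 < 2.7182818286 := Real.exp_one_lt_d9
    have hlog2 : 0 ≤ Real.log n ^ 2 := sq_nonneg _
    have h10 : 0 ≤ (2.7182818286 - Real.exp 1) * Real.log n ^ 2 :=
      mul_nonneg (by linarith) hlog2
    have e1 : (n:ℝ) * (p * t + (Real.exp t - 1 - t)/4)
        = ((n:ℝ)*p)*t + ((n:ℝ)*(Real.exp t - 1 - t))/4 := by ring
    have e2 : t * ((n:ℝ)*p + Real.sqrt n * Real.log n)
        = ((n:ℝ)*p)*t + 13/10 * Real.log n ^ 2 := by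
      rw [mul_add, htsqrt]; ring
    have h7' : (n:ℝ)*(Real.exp t - 1 - t) ≤ (Real.exp 1 - 2) * (169/100 * Real.log n ^ 2) := by
      calc (n:ℝ)*(Real.exp t - 1 - t) ≤ (n:ℝ)*((Real.exp 1 - 2)*t^2) := h7
        _ = (Real.exp 1 - 2) * ((n:ℝ)*t^2) := by ring
        _ = _ := by rw [h8]
    rw [e2] at h9
    rw [e1]
    linarith [h9, h7', h10]
  calc Real.exp (-t * ε) * (1 + (Real.exp t - 1) * p) ^ n
      ≤ Real.exp (-t * ε) * Real.exp ((n:ℝ) * (p * t + (Real.exp t - 1 - t) / 4)) := by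
        apply mul_le_mul_of_nonneg_left hpow (Real.exp_pos _).le
    _ = Real.exp (-t * ε + (n:ℝ) * (p * t + (Real.exp t - 1 - t) / 4)) := by
        rw [← Real.exp_add]
    _ ≤ Real.exp (-(2/3) * Real.log n ^ 2) := by
        apply Real.exp_le_exp.mpr
        have : -t * ε = -(t * ε) := by ring
        linarith [hexpbound]

lemma count_ge_of_sorted_gt {n : ℕ} (f : Fin n → ℝ) (k : Fin n) (x : ℝ)
    (h : x < (f ∘ Tuple.sort f) k) :
    ((n : ℝ) - (k : ℕ)) ≤ ∑ i, (Set.Ioi x).indicator (fun _ => (1:ℝ)) (f i) := by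
  classical
  have hsub : Finset.image (Tuple.sort f) (Finset.Ici k)
      ⊆ Finset.univ.filter (fun i => f i ∈ Set.Ioi x) := by
    intro i hi
    rw [Finset.mem_image] at hi
    obtain ⟨j, hj, rfl⟩ := hi
    rw [Finset.mem_Ici] at hj
    refine Finset.mem_filter.mpr ⟨Finset.mem_univ _, ?_⟩
    exact Set.mem_Ioi.mpr (lt_of_lt_of_le h (Tuple.monotone_sort f hj))
  have hcard : (n : ℕ) - (k : ℕ)
      ≤ (Finset.univ.filter (fun i => f i ∈ Set.Ioi x)).card := by
    calc (n : ℕ) - (k : ℕ) = (Finset.Ici k).card := (Fin.card_Ici k).symm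
      _ = (Finset.image (Tuple.sort f) (Finset.Ici k)).card :=
          (Finset.card_image_of_injective _ (Tuple.sort f).injective).symm
      _ ≤ _ := Finset.card_le_card hsub
  have hsum : ((Finset.univ.filter (fun i => f i ∈ Set.Ioi x)).card : ℝ)
      ≤ ∑ i, (Set.Ioi x).indicator (fun _ => (1:ℝ)) (f i) := by
    rw [Finset.card_eq_sum_ones]
    push_cast
    rw [← Finset.sum_filter_add_sum_filter_not Finset.univ (fun i => f i ∈ Set.Ioi x)
      (fun i => (Set.Ioi x).indicator (fun _ => (1:ℝ)) (f i))]
    have h1 : ∀ i ∈ Finset.univ.filter (fun i => f i ∈ Set.Ioi x),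
        (Set.Ioi x).indicator (fun _ => (1:ℝ)) (f i) = 1 := by
      intro i hi
      exact Set.indicator_of_mem (Finset.mem_filter.mp hi).2 _
    rw [Finset.sum_congr rfl h1]
    have h2 : 0 ≤ ∑ i ∈ Finset.univ.filter (fun i => ¬ f i ∈ Set.Ioi x),
        (Set.Ioi x).indicator (fun _ => (1:ℝ)) (f i) :=
      Finset.sum_nonneg fun i _ => Set.indicator_nonneg (fun _ _ => zero_le_one) _
    simp only [Finset.sum_const, nsmul_eq_mul, mul_one]
    linarith
  have hk : (k : ℕ) ≤ n := (k.isLt).le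
  calc ((n : ℝ) - (k : ℕ)) = (((n : ℕ) - (k : ℕ) : ℕ) : ℝ) := by
        rw [Nat.cast_sub hk]
    _ ≤ ((Finset.univ.filter (fun i => f i ∈ Set.Ioi x)).card : ℝ) := by exact_mod_cast hcard
    _ ≤ _ := hsum

lemma count_ge_of_sorted_lt {n : ℕ} (f : Fin n → ℝ) (k : Fin n) (y : ℝ)
    (h : (f ∘ Tuple.sort f) k < y) :
    (((k : ℕ) : ℝ) + 1) ≤ ∑ i, (Set.Iio y).indicator (fun _ => (1:ℝ)) (f i) := by
  classical
  have hsub : Finset.image (Tuple.sort f) (Finset.Iic k)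
      ⊆ Finset.univ.filter (fun i => f i ∈ Set.Iio y) := by
    intro i hi
    rw [Finset.mem_image] at hi
    obtain ⟨j, hj, rfl⟩ := hi
    rw [Finset.mem_Iic] at hj
    refine Finset.mem_filter.mpr ⟨Finset.mem_univ _, ?_⟩
    exact Set.mem_Iio.mpr (lt_of_le_of_lt (Tuple.monotone_sort f hj) h)
  have hcard : (k : ℕ) + 1
      ≤ (Finset.univ.filter (fun i => f i ∈ Set.Iio y)).card := by
    calc (k : ℕ) + 1 = (Finset.Iic k).card := (Fin.card_Iic k).symm
      _ = (Finset.image (Tuple.sort f) (Finset.Iic k)).card :=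
          (Finset.card_image_of_injective _ (Tuple.sort f).injective).symm
      _ ≤ _ := Finset.card_le_card hsub
  have hsum : ((Finset.univ.filter (fun i => f i ∈ Set.Iio y)).card : ℝ)
      ≤ ∑ i, (Set.Iio y).indicator (fun _ => (1:ℝ)) (f i) := by
    rw [Finset.card_eq_sum_ones]
    push_cast
    rw [← Finset.sum_filter_add_sum_filter_not Finset.univ (fun i => f i ∈ Set.Iio y)
      (fun i => (Set.Iio y).indicator (fun _ => (1:ℝ)) (f i))]
    have h1 : ∀ i ∈ Finset.univ.filter (fun i => f i ∈ Set.Iio y),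
        (Set.Iio y).indicator (fun _ => (1:ℝ)) (f i) = 1 := by
      intro i hi
      exact Set.indicator_of_mem (Finset.mem_filter.mp hi).2 _
    rw [Finset.sum_congr rfl h1]
    have h2 : 0 ≤ ∑ i ∈ Finset.univ.filter (fun i => ¬ f i ∈ Set.Iio y),
        (Set.Iio y).indicator (fun _ => (1:ℝ)) (f i) :=
      Finset.sum_nonneg fun i _ => Set.indicator_nonneg (fun _ _ => zero_le_one) _
    simp only [Finset.sum_const, nsmul_eq_mul, mul_one]
    linarith
  calc (((k : ℕ) : ℝ) + 1) = (((k : ℕ) + 1 : ℕ) : ℝ) := by push_cast; ring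
    _ ≤ ((Finset.univ.filter (fun i => f i ∈ Set.Iio y)).card : ℝ) := by exact_mod_cast hcard
    _ ≤ _ := hsum

/-- Concentration of uniform order statistics: if `U₁, …, Uₙ` are
i.i.d. Uniform[0,1] random variables with order statistics `U_(1) ≤ ⋯ ≤ U_(n)`, then
for `n > 2` the probability that some `k` satisfies `|U_(k) - k/n| > (log n)/√n` is at
most `2 n exp(-(2/3)(log n)²)`.  Here the `k`-th order statistic (for `k : Fin n`,
representing index `k+1`) is obtained by composing with the sorting permutation
`Tuple.sort`. -/
theorem orderStatistic_concentration
    {Ω : Type*} [MeasurableSpace Ω] (P : Measure Ω) [IsProbabilityMeasure P]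
    (n : ℕ) (hn : 2 < n) (U : Fin n → Ω → ℝ)
    (hmeas : ∀ i, Measurable (U i))
    (hindep : iIndepFun U P)
    (hunif : ∀ i, P.map (U i) = volume.restrict (Icc (0:ℝ) 1)) :
    P {ω | ∃ k : Fin n,
        Real.log n / Real.sqrt n <
          |((fun i => U i ω) ∘ Tuple.sort (fun i => U i ω)) k - ((k : ℕ) + 1) / n|}
      ≤ ENNReal.ofReal (2 * n * Real.exp (-(2/3) * (Real.log n)^2)) := by
  classical
  have hn1 : (1:ℝ) < (n:ℝ) := by exact_mod_cast Nat.lt_of_lt_of_le Nat.one_lt_two hn.le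
  have hn0 : (0:ℝ) < (n:ℝ) := by linarith
  have hlog : 0 < Real.log n := Real.log_pos hn1
  have hsqrt0 : 0 < Real.sqrt n := Real.sqrt_pos.mpr hn0
  have hsq : Real.sqrt n ^ 2 = (n:ℝ) := Real.sq_sqrt hn0.le
  have hδ0 : 0 < Real.log n / Real.sqrt n := div_pos hlog hsqrt0
  have ht0 : 0 ≤ 13/10 * (Real.log n / Real.sqrt n) := by positivity
  have hnδ : (n:ℝ) * (Real.log n / Real.sqrt n) = Real.sqrt n * Real.log n := by
    rw [← hsq]
    field_simp
    rw [hsq]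
    linear_combination (-Real.log (n:ℝ)) * hsq
  have hmap : ∀ i (S : Set ℝ), MeasurableSet S →
      P ((U i) ⁻¹' S) = (volume.restrict (Icc (0:ℝ) 1)) S := by
    intro i S hS
    rw [← hunif i, Measure.map_apply (hmeas i) hS]
  -- the two one-sided events
  set A : Fin n → Set Ω := fun k => {ω | (((k:ℕ):ℝ) + 1)/(n:ℝ) + Real.log n / Real.sqrt n
      < ((fun i => U i ω) ∘ Tuple.sort (fun i => U i ω)) k} with hA
  set C : Fin n → Set Ω := fun k => {ω | ((fun i => U i ω) ∘ Tuple.sort (fun i => U i ω)) k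
      < (((k:ℕ):ℝ) + 1)/(n:ℝ) - Real.log n / Real.sqrt n} with hC
  have hplus : ∀ k : Fin n, P (A k) ≤ ENNReal.ofReal (Real.exp (-(2/3) * Real.log n ^ 2)) := by
    intro k
    by_cases hx : (((k:ℕ):ℝ) + 1)/(n:ℝ) + Real.log n / Real.sqrt n < 1
    · set x : ℝ := (((k:ℕ):ℝ) + 1)/(n:ℝ) + Real.log n / Real.sqrt n with hxdef
      have hm0 : (0:ℝ) ≤ (((k:ℕ):ℝ) + 1)/(n:ℝ) := by positivity
      have hx0 : 0 ≤ x := by rw [hxdef]; linarith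
      have hpS : ∀ i, P ((U i) ⁻¹' (Set.Ioi x)) = ENNReal.ofReal (1 - x) := by
        intro i
        rw [hmap i _ measurableSet_Ioi, Measure.restrict_apply measurableSet_Ioi]
        have hint : Set.Ioi x ∩ Set.Icc 0 1 = Set.Ioc x 1 := by
          ext a
          simp only [Set.mem_inter_iff, Set.mem_Ioi, Set.mem_Icc, Set.mem_Ioc]
          constructor
          · rintro ⟨h1, _, h3⟩; exact ⟨h1, h3⟩
          · rintro ⟨h1, h2⟩; exact ⟨h1, le_trans hx0 h1.le, h2⟩
        rw [hint, Real.volume_Ioc]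
      have hch := chernoff_indicator P U hmeas hindep (Set.Ioi x) measurableSet_Ioi (1 - x)
        hpS (by linarith) (13/10 * (Real.log n / Real.sqrt n)) ((n:ℝ) - (k:ℕ)) ht0
      have hev : A k ⊆ {ω | ((n:ℝ) - (k:ℕ))
          ≤ ∑ i, (Set.Ioi x).indicator (fun _ => (1:ℝ)) (U i ω)} :=
        fun ω h => count_ge_of_sorted_gt (fun i => U i ω) k x h
      refine le_trans (le_trans (measure_mono hev) hch) (ENNReal.ofReal_le_ofReal ?_)
      have hnx : (n:ℝ) * x = ((k:ℕ):ℝ) + 1 + Real.sqrt n * Real.log n := by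
        rw [hxdef, mul_add, hnδ, mul_div_cancel₀ _ hn0.ne']
      refine numeric_bound n hn (1 - x) ((n:ℝ) - (k:ℕ)) (by linarith) (by linarith) ?_
      nlinarith [hnx]
    · push_neg at hx
      have hnull : ∀ i, P ((U i) ⁻¹' (Set.Ioi (1:ℝ))) = 0 := by
        intro i
        rw [hmap i _ measurableSet_Ioi, Measure.restrict_apply measurableSet_Ioi]
        have hint : Set.Ioi (1:ℝ) ∩ Set.Icc 0 1 = ∅ := by
          ext a
          simp only [Set.mem_inter_iff, Set.mem_Ioi, Set.mem_Icc, Set.mem_empty_iff_false,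
            iff_false, not_and]
          intro h1 h2
          linarith
        rw [hint]
        simp
      have hsubset : A k ⊆ ⋃ i, (U i) ⁻¹' (Set.Ioi (1:ℝ)) := by
        intro ω h
        refine Set.mem_iUnion.mpr ⟨Tuple.sort (fun i => U i ω) k, ?_⟩
        simp only [Set.mem_preimage, Set.mem_Ioi]
        have h' : (((k:ℕ):ℝ) + 1)/(n:ℝ) + Real.log n / Real.sqrt n
            < U (Tuple.sort (fun i => U i ω) k) ω := h
        linarith
      have h0 : P (A k) = 0 :=
        measure_mono_null hsubset (measure_iUnion_null hnull)
      rw [h0]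
      exact bot_le
  have hminus : ∀ k : Fin n, P (C k) ≤ ENNReal.ofReal (Real.exp (-(2/3) * Real.log n ^ 2)) := by
    intro k
    by_cases hy : 0 < (((k:ℕ):ℝ) + 1)/(n:ℝ) - Real.log n / Real.sqrt n
    · set y : ℝ := (((k:ℕ):ℝ) + 1)/(n:ℝ) - Real.log n / Real.sqrt n with hydef
      have hm1 : (((k:ℕ):ℝ) + 1)/(n:ℝ) ≤ 1 := by
        rw [div_le_one hn0]
        have := k.isLt
        exact_mod_cast Nat.succ_le_of_lt this
      have hy1 : y ≤ 1 := by rw [hydef]; linarith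
      have hpS : ∀ i, P ((U i) ⁻¹' (Set.Iio y)) = ENNReal.ofReal y := by
        intro i
        rw [hmap i _ measurableSet_Iio, Measure.restrict_apply measurableSet_Iio]
        have hint : Set.Iio y ∩ Set.Icc 0 1 = Set.Ico 0 y := by
          ext a
          simp only [Set.mem_inter_iff, Set.mem_Iio, Set.mem_Icc, Set.mem_Ico]
          constructor
          · rintro ⟨h1, h2, _⟩; exact ⟨h2, h1⟩
          · rintro ⟨h1, h2⟩; exact ⟨h2, h1, le_trans h2.le hy1⟩
        rw [hint, Real.volume_Ico, sub_zero]
      have hch := chernoff_indicator P U hmeas hindep (Set.Iio y) measurableSet_Iio y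
        hpS hy.le (13/10 * (Real.log n / Real.sqrt n)) (((k:ℕ):ℝ) + 1) ht0
      have hev : C k ⊆ {ω | (((k:ℕ):ℝ) + 1)
          ≤ ∑ i, (Set.Iio y).indicator (fun _ => (1:ℝ)) (U i ω)} :=
        fun ω h => count_ge_of_sorted_lt (fun i => U i ω) k y h
      refine le_trans (le_trans (measure_mono hev) hch) (ENNReal.ofReal_le_ofReal ?_)
      have hny : (n:ℝ) * y = ((k:ℕ):ℝ) + 1 - Real.sqrt n * Real.log n := by
        rw [hydef, mul_sub, hnδ, mul_div_cancel₀ _ hn0.ne']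
      refine numeric_bound n hn y (((k:ℕ):ℝ) + 1) hy.le hy1 ?_
      linarith [hny]
    · push_neg at hy
      have hnull : ∀ i, P ((U i) ⁻¹' (Set.Iio (0:ℝ))) = 0 := by
        intro i
        rw [hmap i _ measurableSet_Iio, Measure.restrict_apply measurableSet_Iio]
        have hint : Set.Iio (0:ℝ) ∩ Set.Icc 0 1 = ∅ := by
          ext a
          simp only [Set.mem_inter_iff, Set.mem_Iio, Set.mem_Icc, Set.mem_empty_iff_false,
            iff_false, not_and]
          intro h1 h2
          linarith
        rw [hint]
        simp
      have hsubset : C k ⊆ ⋃ i, (U i) ⁻¹' (Set.Iio (0:ℝ)) := by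
        intro ω h
        refine Set.mem_iUnion.mpr ⟨Tuple.sort (fun i => U i ω) k, ?_⟩
        simp only [Set.mem_preimage, Set.mem_Iio]
        have h' : U (Tuple.sort (fun i => U i ω) k) ω
            < (((k:ℕ):ℝ) + 1)/(n:ℝ) - Real.log n / Real.sqrt n := h
        linarith
      have h0 : P (C k) = 0 :=
        measure_mono_null hsubset (measure_iUnion_null hnull)
      rw [h0]
      exact bot_le
  have hincl : {ω | ∃ k : Fin n,
      Real.log n / Real.sqrt n <
        |((fun i => U i ω) ∘ Tuple.sort (fun i => U i ω)) k - ((k : ℕ) + 1) / n|}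
      ⊆ ⋃ k : Fin n, (A k ∪ C k) := by
    intro ω hω
    obtain ⟨k, hk⟩ := hω
    refine Set.mem_iUnion.mpr ⟨k, ?_⟩
    rcases lt_abs.mp hk with h | h
    · exact Or.inl (by simp only [hA, Set.mem_setOf_eq]; linarith)
    · exact Or.inr (by simp only [hC, Set.mem_setOf_eq]; linarith)
  have he0 : (0:ℝ) ≤ Real.exp (-(2/3) * Real.log n ^ 2) := (Real.exp_pos _).le
  calc P {ω | ∃ k : Fin n,
      Real.log n / Real.sqrt n <
        |((fun i => U i ω) ∘ Tuple.sort (fun i => U i ω)) k - ((k : ℕ) + 1) / n|}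
      ≤ P (⋃ k : Fin n, (A k ∪ C k)) := measure_mono hincl
    _ ≤ ∑' k : Fin n, P (A k ∪ C k) := measure_iUnion_le _
    _ ≤ ∑' k : Fin n, (ENNReal.ofReal (Real.exp (-(2/3) * Real.log n ^ 2))
        + ENNReal.ofReal (Real.exp (-(2/3) * Real.log n ^ 2))) :=
      ENNReal.tsum_le_tsum fun k =>
        le_trans (measure_union_le _ _) (add_le_add (hplus k) (hminus k))
    _ = (n : ENNReal) * (ENNReal.ofReal (Real.exp (-(2/3) * Real.log n ^ 2))
        + ENNReal.ofReal (Real.exp (-(2/3) * Real.log n ^ 2))) := by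
      rw [tsum_fintype]
      simp only [Finset.sum_const, Finset.card_univ, Fintype.card_fin, nsmul_eq_mul]
    _ = ENNReal.ofReal (2 * n * Real.exp (-(2/3) * (Real.log n)^2)) := by
      rw [← ENNReal.ofReal_add he0 he0, ← ENNReal.ofReal_natCast n,
        ← ENNReal.ofReal_mul (Nat.cast_nonneg n)]
      congr 1
      ring
end

section
/- Sup-norm approximation of a Lipschitz kernel by its empirical block version: Let f : [0,1]² → ℝ be symmetric and Lipschitz with constant L, let U₁, …, Uₙ be i.i.d. Uniform[0,1] with order statistics U_(1) ≤ ⋯ ≤ U_(n), and define fₙ(x,y) = f(U_(i), U_(j)) for (x,y) in the block ((i−1)/n, i/n] × ((j−1)/n, j/n]. Then with probability at least 1 − 4n·exp(−(1/6)(log n)²), we have sup_{x,y ∈ [0,1]} |f(x,y) − fₙ(x,y)| ≤ √2 · L · (log n)/√n. -/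
open MeasureTheory ProbabilityTheory Set


lemma card_filter_perm {n : ℕ} (σ : Equiv.Perm (Fin n)) (p : Fin n → Prop) [DecidablePred p] :
    (Finset.univ.filter fun j => p (σ j)).card = (Finset.univ.filter p).card := by
  apply Finset.card_bij (fun j _ => σ j)
  · intro a ha; simp only [Finset.mem_filter, Finset.mem_univ, true_and] at ha ⊢; exact ha
  · intro a _ b _ h; exact σ.injective h
  · intro b hb
    refine ⟨σ.symm b, ?_, by simp⟩
    simp only [Finset.mem_filter, Finset.mem_univ, true_and, Equiv.apply_symm_apply] at hb ⊢
    exact hb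

lemma sorted_count_lt {n : ℕ} (v : Fin n → ℝ) (i : Fin n) (t : ℝ)
    (h : v (Tuple.sort v i) < t) :
    (i : ℕ) + 1 ≤ (Finset.univ.filter fun j => v j < t).card := by
  rw [← card_filter_perm (Tuple.sort v) (fun j => v j < t)]
  calc (i : ℕ) + 1 = (Finset.Iic i).card := (Fin.card_Iic i).symm
    _ ≤ _ := by
        apply Finset.card_le_card
        intro j hj
        simp only [Finset.mem_Iic] at hj
        simp only [Finset.mem_filter, Finset.mem_univ, true_and]
        exact lt_of_le_of_lt (Tuple.monotone_sort v hj) h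

lemma sorted_count_gt {n : ℕ} (v : Fin n → ℝ) (i : Fin n) (t : ℝ)
    (h : t < v (Tuple.sort v i)) :
    n - (i : ℕ) ≤ (Finset.univ.filter fun j => t < v j).card := by
  rw [← card_filter_perm (Tuple.sort v) (fun j => t < v j)]
  calc n - (i : ℕ) = (Finset.Ici i).card := (Fin.card_Ici i).symm
    _ ≤ _ := by
        apply Finset.card_le_card
        intro j hj
        simp only [Finset.mem_Ici] at hj
        simp only [Finset.mem_filter, Finset.mem_univ, true_and]
        exact lt_of_lt_of_le h (Tuple.monotone_sort v hj)

open MeasureTheory ProbabilityTheory Set Finset Real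

lemma chernoff01 {Ω : Type*} [MeasurableSpace Ω] (P : Measure Ω) [IsProbabilityMeasure P]
    {n : ℕ} (X : Fin n → Ω → ℝ)
    (h01 : ∀ j ω, X j ω = 0 ∨ X j ω = 1)
    (hmeas : ∀ j, Measurable (X j))
    (hindep : iIndepFun X P)
    (p δ : ℝ) (hp0 : 0 ≤ p) (hp1 : p ≤ 1)
    (hp : ∀ j, ∫ ω, X j ω ∂P ≤ p)
    (hδ0 : 0 ≤ δ) (hδ2 : δ ≤ 2)
    (m : ℝ) (hm : (n : ℝ) * p + n * δ ≤ m) :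
    P {ω | m ≤ ∑ j, X j ω} ≤ ENNReal.ofReal (Real.exp (-((n : ℝ) * δ^2) / 4)) := by
  set s := δ / 2 with hs_def
  have hs0 : 0 ≤ s := by positivity
  have hs1 : s ≤ 1 := by simp only [hs_def]; linarith
  have hXb : ∀ j, ∀ ω, ‖X j ω‖ ≤ 1 := by
    intro j ω; rcases h01 j ω with h | h <;> simp [h]
  have hXint : ∀ j, Integrable (X j) P := fun j =>
    (integrable_const (1:ℝ)).mono' (hmeas j).aestronglyMeasurable (ae_of_all _ (hXb j))
  have hkey : ∀ j ω, Real.exp (s * X j ω) = 1 + (Real.exp s - 1) * X j ω := by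
    intro j ω; rcases h01 j ω with h | h <;> simp [h]
  have hint : ∀ j, Integrable (fun ω => Real.exp (s * X j ω)) P := by
    intro j
    exact ((integrable_const (1:ℝ)).add ((hXint j).const_mul (Real.exp s - 1))).congr
      (ae_of_all _ fun ω => by simp only [Pi.add_apply]; rw [← hkey j ω])
  -- bound each mgf
  have hexp2 : Real.exp s ≤ 1 + s + s ^ 2 := by
    have := Real.exp_bound' hs0 hs1 (n := 2) (by norm_num)
    simp [Finset.sum_range_succ, Nat.factorial] at this
    nlinarith [sq_nonneg s]
  have hmgf : ∀ j, mgf (X j) P s ≤ Real.exp (p * s + s ^ 2) := by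
    intro j
    have h1 : mgf (X j) P s = 1 + (Real.exp s - 1) * ∫ ω, X j ω ∂P := by
      rw [mgf]
      rw [integral_congr_ae (ae_of_all _ fun ω => hkey j ω)]
      rw [integral_add (integrable_const _) ((hXint j).const_mul _),
        integral_const, integral_const_mul]
      simp
    have hes1 : 0 ≤ Real.exp s - 1 := by
      have := Real.one_le_exp hs0; linarith
    have h2 : mgf (X j) P s ≤ 1 + (Real.exp s - 1) * p := by
      rw [h1]; nlinarith [hp j]
    calc mgf (X j) P s ≤ 1 + (Real.exp s - 1) * p := h2
      _ ≤ Real.exp ((Real.exp s - 1) * p) := by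
          have := Real.add_one_le_exp ((Real.exp s - 1) * p); linarith
      _ ≤ Real.exp (p * s + s ^ 2) := by
          apply Real.exp_le_exp.mpr; nlinarith
  have hsum_int : Integrable (fun ω => Real.exp (s * (∑ j, X j) ω)) P :=
    hindep.integrable_exp_mul_sum hmeas (fun j _ => hint j)
  have hcher := measure_ge_le_exp_mul_mgf (μ := P) (X := ∑ j, X j) m hs0 hsum_int
  rw [hindep.mgf_sum hmeas] at hcher
  have hprod : ∏ j : Fin n, mgf (X j) P s ≤ Real.exp ((n : ℝ) * (p * s + s ^ 2)) := by
    calc ∏ j : Fin n, mgf (X j) P s ≤ ∏ _j : Fin n, Real.exp (p * s + s ^ 2) :=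
          Finset.prod_le_prod (fun j _ => mgf_nonneg) (fun j _ => hmgf j)
      _ = Real.exp ((n : ℝ) * (p * s + s ^ 2)) := by
          rw [Finset.prod_const, ← Real.exp_nat_mul]; simp
  have hfinal : (P {ω | m ≤ (∑ j, X j) ω}).toReal ≤ Real.exp (-((n : ℝ) * δ^2) / 4) := by
    calc (P {ω | m ≤ (∑ j, X j) ω}).toReal ≤ Real.exp (-s * m) * ∏ j : Fin n, mgf (X j) P s :=
          hcher
      _ ≤ Real.exp (-s * m) * Real.exp ((n : ℝ) * (p * s + s ^ 2)) := by
          apply mul_le_mul_of_nonneg_left hprod (Real.exp_pos _).le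
      _ = Real.exp (-s * m + (n : ℝ) * (p * s + s ^ 2)) := (Real.exp_add _ _).symm
      _ ≤ Real.exp (-((n : ℝ) * δ^2) / 4) := by
          apply Real.exp_le_exp.mpr
          have hns : -s * m ≤ -s * ((n : ℝ) * p + n * δ) := by nlinarith
          rw [hs_def] at hns ⊢
          nlinarith [hns]
  have hset : {ω | m ≤ ∑ j, X j ω} = {ω | m ≤ (∑ j, X j) ω} := by
    ext ω; simp [Finset.sum_apply]
  rw [hset]
  rw [← ENNReal.ofReal_toReal (measure_ne_top P _)]
  exact ENNReal.ofReal_le_ofReal hfinal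

section
variable {Ω : Type*} [MeasurableSpace Ω] (P : Measure Ω) [IsProbabilityMeasure P]
  {n : ℕ} (U : Fin n → Ω → ℝ)

lemma uniform_lt_zero (hmeas : ∀ i, Measurable (U i))
    (hunif : ∀ i, P.map (U i) = volume.restrict (Icc (0:ℝ) 1)) (j : Fin n) {t : ℝ}
    (ht : t ≤ 0) : P ((U j) ⁻¹' (Iio t)) = 0 := by
  rw [← Measure.map_apply (hmeas j) measurableSet_Iio, hunif j,
    Measure.restrict_apply measurableSet_Iio]
  have : Iio t ∩ Icc (0:ℝ) 1 = ∅ := by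
    ext x; simp only [mem_inter_iff, Set.mem_Iio, Set.mem_Icc, mem_empty_iff_false, iff_false]
    rintro ⟨h1, h2, _⟩; linarith
  rw [this, measure_empty]

lemma uniform_gt_one (hmeas : ∀ i, Measurable (U i))
    (hunif : ∀ i, P.map (U i) = volume.restrict (Icc (0:ℝ) 1)) (j : Fin n) {t : ℝ}
    (ht : 1 ≤ t) : P ((U j) ⁻¹' (Ioi t)) = 0 := by
  rw [← Measure.map_apply (hmeas j) measurableSet_Ioi, hunif j,
    Measure.restrict_apply measurableSet_Ioi]
  have : Ioi t ∩ Icc (0:ℝ) 1 = ∅ := by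
    ext x; simp only [mem_inter_iff, Set.mem_Ioi, Set.mem_Icc, mem_empty_iff_false, iff_false]
    rintro ⟨h1, _, h2⟩; linarith
  rw [this, measure_empty]

lemma integral_indicator_lt (hmeas : ∀ i, Measurable (U i))
    (hunif : ∀ i, P.map (U i) = volume.restrict (Icc (0:ℝ) 1)) (j : Fin n) {t : ℝ}
    (ht : 0 ≤ t) :
    ∫ ω, (if U j ω < t then (1:ℝ) else 0) ∂P ≤ t := by
  have hset : MeasurableSet ((U j) ⁻¹' (Iio t)) := (hmeas j) measurableSet_Iio
  have h1 : (fun ω => if U j ω < t then (1:ℝ) else 0) =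
      Set.indicator ((U j) ⁻¹' (Iio t)) (fun _ => (1:ℝ)) := by
    ext ω; by_cases h : U j ω < t <;> simp [Set.indicator_apply, Set.mem_preimage, Set.mem_Iio, h]
  rw [h1, integral_indicator_const _ hset]
  have h2 : P ((U j) ⁻¹' (Iio t)) ≤ ENNReal.ofReal t := by
    rw [← Measure.map_apply (hmeas j) measurableSet_Iio, hunif j,
      Measure.restrict_apply measurableSet_Iio]
    calc volume (Iio t ∩ Icc (0:ℝ) 1) ≤ volume (Ico (0:ℝ) t) := by
          apply measure_mono; rintro x ⟨h1, h2, _⟩; exact ⟨h2, h1⟩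
      _ = ENNReal.ofReal t := by rw [Real.volume_Ico]; simp
  simpa [Measure.real] using ENNReal.toReal_le_of_le_ofReal ht h2

lemma integral_indicator_gt (hmeas : ∀ i, Measurable (U i))
    (hunif : ∀ i, P.map (U i) = volume.restrict (Icc (0:ℝ) 1)) (j : Fin n) {t : ℝ}
    (ht : t ≤ 1) :
    ∫ ω, (if t < U j ω then (1:ℝ) else 0) ∂P ≤ 1 - t := by
  have hset : MeasurableSet ((U j) ⁻¹' (Ioi t)) := (hmeas j) measurableSet_Ioi
  have h1 : (fun ω => if t < U j ω then (1:ℝ) else 0) =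
      Set.indicator ((U j) ⁻¹' (Ioi t)) (fun _ => (1:ℝ)) := by
    ext ω; by_cases h : t < U j ω <;> simp [Set.indicator_apply, Set.mem_preimage, Set.mem_Ioi, h]
  rw [h1, integral_indicator_const _ hset]
  have h2 : P ((U j) ⁻¹' (Ioi t)) ≤ ENNReal.ofReal (1 - t) := by
    rw [← Measure.map_apply (hmeas j) measurableSet_Ioi, hunif j,
      Measure.restrict_apply measurableSet_Ioi]
    calc volume (Ioi t ∩ Icc (0:ℝ) 1) ≤ volume (Ioc t 1) := by
          apply measure_mono; rintro x ⟨h1, _, h2⟩; exact ⟨h1, h2⟩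
      _ = ENNReal.ofReal (1 - t) := by rw [Real.volume_Ioc]
  simpa [Measure.real] using ENNReal.toReal_le_of_le_ofReal (by linarith) h2

end

section
variable {Ω : Type*} [MeasurableSpace Ω] (P : Measure Ω) [IsProbabilityMeasure P]
  {n : ℕ} (U : Fin n → Ω → ℝ)

lemma tail_A (hn : 0 < n) (hmeas : ∀ i, Measurable (U i))
    (hindep : iIndepFun U P)
    (hunif : ∀ i, P.map (U i) = volume.restrict (Icc (0:ℝ) 1))
    {δ : ℝ} (hδ0 : 0 ≤ δ) (hδ2 : δ ≤ 2) (i : Fin n) :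
    P {ω | U (Tuple.sort (fun a => U a ω) i) ω < ((i : ℝ) + 1) / n - δ} ≤
      ENNReal.ofReal (Real.exp (-((n : ℝ) * δ ^ 2) / 4)) := by
  set t : ℝ := ((i : ℝ) + 1) / n - δ with ht_def
  by_cases ht : t ≤ 0
  · -- null case
    have hsub : {ω | U (Tuple.sort (fun a => U a ω) i) ω < t} ⊆
        ⋃ j : Fin n, (U j) ⁻¹' (Iio t) := by
      intro ω hω
      exact Set.mem_iUnion.mpr ⟨Tuple.sort (fun a => U a ω) i, hω⟩
    calc P _ ≤ P (⋃ j : Fin n, (U j) ⁻¹' (Iio t)) := measure_mono hsub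
      _ ≤ ∑' j : Fin n, P ((U j) ⁻¹' (Iio t)) := measure_iUnion_le _
      _ = 0 := by simp [uniform_lt_zero P U hmeas hunif _ ht]
      _ ≤ _ := zero_le
  · push_neg at ht
    have hn' : (0:ℝ) < n := Nat.cast_pos.mpr hn
    set X : Fin n → Ω → ℝ := fun j ω => if U j ω < t then 1 else 0 with hX_def
    have hsub : {ω | U (Tuple.sort (fun a => U a ω) i) ω < t} ⊆
        {ω | ((i : ℕ) + 1 : ℝ) ≤ ∑ j, X j ω} := by
      intro ω hω
      have hcard := sorted_count_lt (fun a => U a ω) i t hω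
      have hsum : ∑ j, X j ω = ((Finset.univ.filter fun j => U j ω < t).card : ℝ) := by
        simp [hX_def, Finset.sum_boole]
      simp only [Set.mem_setOf_eq, hsum]
      exact_mod_cast hcard
    refine le_trans (measure_mono hsub) ?_
    apply chernoff01 P X (fun j ω => by by_cases h : U j ω < t <;> simp [hX_def, h])
      (fun j => Measurable.ite ((hmeas j) measurableSet_Iio) measurable_const measurable_const)
      (hindep.comp (fun _ x => if x < t then (1:ℝ) else 0)
        (fun _ => Measurable.ite measurableSet_Iio measurable_const measurable_const))
      t δ ht.le ?_ (fun j => integral_indicator_lt P U hmeas hunif j ht.le) hδ0 hδ2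
      _ ?_
    · -- t ≤ 1
      rw [ht_def]
      have : (i : ℝ) + 1 ≤ n := by exact_mod_cast i.2
      have h1 : ((i : ℝ) + 1) / n ≤ 1 := by rw [div_le_one hn']; exact this
      linarith
    · -- n * t + n * δ ≤ i + 1
      rw [ht_def]
      field_simp
      linarith

lemma tail_B (hn : 0 < n) (hmeas : ∀ i, Measurable (U i))
    (hindep : iIndepFun U P)
    (hunif : ∀ i, P.map (U i) = volume.restrict (Icc (0:ℝ) 1))
    {δ : ℝ} (hδ0 : 0 ≤ δ) (hδ2 : δ ≤ 2) (i : Fin n) :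
    P {ω | (i : ℝ) / n + δ < U (Tuple.sort (fun a => U a ω) i) ω} ≤
      ENNReal.ofReal (Real.exp (-((n : ℝ) * δ ^ 2) / 4)) := by
  set t : ℝ := (i : ℝ) / n + δ with ht_def
  have hn' : (0:ℝ) < n := Nat.cast_pos.mpr hn
  have ht0 : 0 ≤ t := by positivity
  by_cases ht : 1 ≤ t
  · have hsub : {ω | t < U (Tuple.sort (fun a => U a ω) i) ω} ⊆
        ⋃ j : Fin n, (U j) ⁻¹' (Ioi t) := by
      intro ω hω
      exact Set.mem_iUnion.mpr ⟨Tuple.sort (fun a => U a ω) i, hω⟩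
    calc P _ ≤ P (⋃ j : Fin n, (U j) ⁻¹' (Ioi t)) := measure_mono hsub
      _ ≤ ∑' j : Fin n, P ((U j) ⁻¹' (Ioi t)) := measure_iUnion_le _
      _ = 0 := by simp [uniform_gt_one P U hmeas hunif _ ht]
      _ ≤ _ := zero_le
  · push_neg at ht
    set X : Fin n → Ω → ℝ := fun j ω => if t < U j ω then 1 else 0 with hX_def
    have hsub : {ω | t < U (Tuple.sort (fun a => U a ω) i) ω} ⊆
        {ω | ((n - (i:ℕ) : ℕ) : ℝ) ≤ ∑ j, X j ω} := by
      intro ω hω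
      have hcard := sorted_count_gt (fun a => U a ω) i t hω
      have hsum : ∑ j, X j ω = ((Finset.univ.filter fun j => t < U j ω).card : ℝ) := by
        simp [hX_def, Finset.sum_boole]
      simp only [Set.mem_setOf_eq, hsum]
      exact_mod_cast hcard
    refine le_trans (measure_mono hsub) ?_
    apply chernoff01 P X (fun j ω => by by_cases h : t < U j ω <;> simp [hX_def, h])
      (fun j => Measurable.ite ((hmeas j) measurableSet_Ioi) measurable_const measurable_const)
      (hindep.comp (fun _ x => if t < x then (1:ℝ) else 0)
        (fun _ => Measurable.ite measurableSet_Ioi measurable_const measurable_const))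
      (1 - t) δ (by linarith) (by linarith)
      (fun j => integral_indicator_gt P U hmeas hunif j ht.le) hδ0 hδ2
      _ ?_
    · -- n * (1 - t) + n * δ ≤ n - i
      have hcast : ((n - (i:ℕ) : ℕ) : ℝ) = (n : ℝ) - (i : ℕ) :=
        Nat.cast_sub i.2.le
      rw [hcast, ht_def]
      field_simp
      linarith [le_refl ((i:ℝ))]

end

/-- Sup-norm approximation of a Lipschitz kernel by its empirical
block version: let `f : [0,1]² → ℝ` be symmetric and Lipschitz with constant `L`, and
let `U₁, …, Uₙ` be i.i.d. Uniform[0,1] with order statistics `U_(1) ≤ ⋯ ≤ U_(n)`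
(given by `Tuple.sort`).  The block kernel `fₙ` takes the value `f(U_(i), U_(j))` on
the block `((i-1)/n, i/n] × ((j-1)/n, j/n]`.  Then with probability at least
`1 - 4 n exp(-(1/6)(log n)²)`, the uniform distance between `f` and `fₙ` over the
blocks is at most `√2 · L · (log n)/√n`. -/
theorem block_kernel_sup_approx
    {Ω : Type*} [MeasurableSpace Ω] (P : Measure Ω) [IsProbabilityMeasure P]
    (n : ℕ) (hn : 0 < n) (f : ℝ → ℝ → ℝ) (L : ℝ)
    (hsym : ∀ x y, f x y = f y x)
    (hlip : ∀ x x' y y' : ℝ, |f x y - f x' y'| ≤ L * Real.sqrt ((x - x')^2 + (y - y')^2))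
    (U : Fin n → Ω → ℝ)
    (hmeas : ∀ i, Measurable (U i))
    (hindep : iIndepFun U P)
    (hunif : ∀ i, P.map (U i) = volume.restrict (Icc (0:ℝ) 1)) :
    ENNReal.ofReal (1 - 4 * n * Real.exp (-(1/6) * (Real.log n)^2)) ≤
      P {ω | ∀ i j : Fin n,
        ∀ x ∈ Ioc ((i : ℝ) / n) (((i : ℕ) + 1) / n),
        ∀ y ∈ Ioc ((j : ℝ) / n) (((j : ℕ) + 1) / n),
          |f x y -
            f (((fun a => U a ω) ∘ Tuple.sort (fun a => U a ω)) i)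
              (((fun a => U a ω) ∘ Tuple.sort (fun a => U a ω)) j)|
            ≤ Real.sqrt 2 * L * Real.log n / Real.sqrt n} := by
  classical
  have hn' : (0:ℝ) < n := Nat.cast_pos.mpr hn
  set δ : ℝ := Real.log n / Real.sqrt n with hδ_def
  have hlog0 : 0 ≤ Real.log n := Real.log_nonneg (by exact_mod_cast hn)
  have hsqrt : 0 < Real.sqrt n := Real.sqrt_pos.mpr hn'
  have hδ0 : 0 ≤ δ := by positivity
  have hδ2 : δ ≤ 2 := by
    rw [hδ_def, div_le_iff₀ hsqrt]
    have h1 : Real.log n = 2 * Real.log (Real.sqrt n) := by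
      rw [Real.log_sqrt hn'.le]; ring
    have h2 : Real.log (Real.sqrt n) ≤ Real.sqrt n - 1 :=
      Real.log_le_sub_one_of_pos hsqrt
    linarith
  have hL : 0 ≤ L := by
    have h := hlip 1 0 0 0
    have h1 : Real.sqrt (((1:ℝ) - 0)^2 + ((0:ℝ) - 0)^2) = 1 := by norm_num
    rw [h1, mul_one] at h
    linarith [abs_nonneg (f 1 0 - f 0 0)]
  set sU : Ω → Fin n → ℝ := fun ω i => U (Tuple.sort (fun a => U a ω) i) ω with hsU_def
  set G : Set Ω :=
    {ω | ∀ i : Fin n, (((i:ℕ):ℝ) + 1) / n - δ ≤ sU ω i ∧ sU ω i ≤ ((i:ℕ):ℝ) / n + δ}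
    with hG_def
  -- good event is contained in the target event
  have hGsub : G ⊆ {ω | ∀ i j : Fin n,
        ∀ x ∈ Ioc ((i : ℝ) / n) (((i : ℕ) + 1) / n),
        ∀ y ∈ Ioc ((j : ℝ) / n) (((j : ℕ) + 1) / n),
          |f x y -
            f (((fun a => U a ω) ∘ Tuple.sort (fun a => U a ω)) i)
              (((fun a => U a ω) ∘ Tuple.sort (fun a => U a ω)) j)|
            ≤ Real.sqrt 2 * L * Real.log n / Real.sqrt n} := by
    intro ω hω
    intro i j x hx y hy
    simp only [Function.comp_apply]
    have hi := hω i
    have hj := hω j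
    have hax : |x - sU ω i| ≤ δ := by
      rw [abs_le]
      obtain ⟨hx1, hx2⟩ := hx
      constructor <;> [linarith [hi.2]; linarith [hi.1]]
    have hby : |y - sU ω j| ≤ δ := by
      rw [abs_le]
      obtain ⟨hy1, hy2⟩ := hy
      constructor <;> [linarith [hj.2]; linarith [hj.1]]
    calc |f x y - f (sU ω i) (sU ω j)|
        ≤ L * Real.sqrt ((x - sU ω i)^2 + (y - sU ω j)^2) := hlip _ _ _ _
      _ ≤ L * Real.sqrt (2 * δ^2) := by
          apply mul_le_mul_of_nonneg_left _ hL
          apply Real.sqrt_le_sqrt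
          have h1 : (x - sU ω i)^2 ≤ δ^2 :=
            sq_le_sq' (by linarith [abs_le.mp hax]) (by linarith [abs_le.mp hax])
          have h2 : (y - sU ω j)^2 ≤ δ^2 :=
            sq_le_sq' (by linarith [abs_le.mp hby]) (by linarith [abs_le.mp hby])
          linarith
      _ = Real.sqrt 2 * L * Real.log n / Real.sqrt n := by
          rw [Real.sqrt_mul (by norm_num) (δ^2), Real.sqrt_sq hδ0, hδ_def]
          ring
  -- the complement of G is a union of tail events
  set e : ENNReal := ENNReal.ofReal (Real.exp (-((n:ℝ) * δ^2) / 4)) with he_def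
  have hbad : P Gᶜ ≤ ENNReal.ofReal (4 * n * Real.exp (-(1/6) * (Real.log n)^2)) := by
    have hsub : Gᶜ ⊆ ⋃ i : Fin n,
        ({ω | sU ω i < (((i:ℕ):ℝ) + 1) / n - δ} ∪ {ω | ((i:ℕ):ℝ) / n + δ < sU ω i}) := by
      intro ω hω
      simp only [hG_def, Set.mem_compl_iff, Set.mem_setOf_eq, not_forall] at hω
      obtain ⟨i, hi⟩ := hω
      rw [not_and_or] at hi
      apply Set.mem_iUnion.mpr
      refine ⟨i, ?_⟩
      rcases hi with h | h
      · exact Or.inl (by simpa using lt_of_not_ge h)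
      · exact Or.inr (by simpa using lt_of_not_ge h)
    have hstep : P Gᶜ ≤ (n : ENNReal) * (e + e) := by
      calc P Gᶜ ≤ P (⋃ i : Fin n, _) := measure_mono hsub
        _ ≤ ∑' i : Fin n, P (({ω | sU ω i < (((i:ℕ):ℝ) + 1) / n - δ} ∪
              {ω | ((i:ℕ):ℝ) / n + δ < sU ω i})) := measure_iUnion_le _
        _ = ∑ i : Fin n, P (({ω | sU ω i < (((i:ℕ):ℝ) + 1) / n - δ} ∪
              {ω | ((i:ℕ):ℝ) / n + δ < sU ω i})) := tsum_fintype _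
        _ ≤ ∑ _i : Fin n, (e + e) := by
            apply Finset.sum_le_sum
            intro i _
            refine le_trans (measure_union_le _ _) (add_le_add ?_ ?_)
            · exact tail_A P U hn hmeas hindep hunif hδ0 hδ2 i
            · exact tail_B P U hn hmeas hindep hunif hδ0 hδ2 i
        _ = (n : ENNReal) * (e + e) := by
            rw [Finset.sum_const, Finset.card_univ, Fintype.card_fin, nsmul_eq_mul]
    refine le_trans hstep ?_
    have hnd : (n:ℝ) * δ^2 = (Real.log n)^2 := by
      rw [hδ_def, div_pow, Real.sq_sqrt hn'.le]
      field_simp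
    have hreal : (n:ℝ) * (Real.exp (-((n:ℝ) * δ^2) / 4) + Real.exp (-((n:ℝ) * δ^2) / 4)) ≤
        4 * n * Real.exp (-(1/6) * (Real.log n)^2) := by
      rw [hnd]
      have hee : Real.exp (-(Real.log n)^2 / 4) ≤ Real.exp (-(1/6) * (Real.log n)^2) := by
        apply Real.exp_le_exp.mpr
        nlinarith [sq_nonneg (Real.log n)]
      nlinarith [Real.exp_pos (-(Real.log n)^2 / 4), hn',
        Real.exp_pos (-(1/6) * (Real.log n)^2)]
    calc (n : ENNReal) * (e + e)
        = ENNReal.ofReal ((n:ℝ) * (Real.exp (-((n:ℝ) * δ^2) / 4) +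
            Real.exp (-((n:ℝ) * δ^2) / 4))) := by
          rw [he_def, ← ENNReal.ofReal_add (Real.exp_pos _).le (Real.exp_pos _).le,
            ← ENNReal.ofReal_natCast n, ← ENNReal.ofReal_mul (Nat.cast_nonneg n)]
      _ ≤ _ := ENNReal.ofReal_le_ofReal hreal
  -- conclude
  have h1 : (1 : ENNReal) ≤ P G + P Gᶜ := by
    rw [← measure_univ (μ := P), ← Set.union_compl_self G]
    exact measure_union_le _ _
  have h2 : ENNReal.ofReal (1 - 4 * n * Real.exp (-(1/6) * (Real.log n)^2)) ≤ P G := by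
    rw [ENNReal.ofReal_sub _ (by positivity), ENNReal.ofReal_one]
    rw [tsub_le_iff_right]
    calc (1 : ENNReal) ≤ P G + P Gᶜ := h1
      _ ≤ P G + ENNReal.ofReal (4 * n * Real.exp (-(1/6) * (Real.log n)^2)) :=
          add_le_add_right hbad _
  exact le_trans h2 (measure_mono hGsub)
end
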